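/- The FIFO queue specification is closed under removing the witness pair in the Enq-Deq rule: if a differentiated history h is linearizable with respect to a sequential execution matching the rule 'Enq(x) first, Deq(x) before all other dequeues' with witness x, and the history h with all operations on x removed is linearizable with respect to the queue specification restricted to rules {R_0, R_Enq, R_EnqDeq}, then h itself is linearizable with respect to that restricted specification. -/

import Mathlib

attribute [local instance] Classical.propDecidable

/-- Operations of a queue history: enqueues and dequeues of data values
(natural numbers), and empty-dequeues (tagged by an identifier). -/
inductive QOp : Type
  | enq (d : ℕ)
  | deq (d : ℕ)
  | deqEmpty (i : ℕ)
deriving DecidableEq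

/-- A differentiated queue history: a finite set of operations (each operation
occurs at most once, so each data value is used at most once) together with a
happens-before relation that is a strict interval order. -/
structure QHistory where
  ops : Finset QOp
  hb : QOp → QOp → Prop
  hb_irrefl : ∀ o, ¬ hb o o
  hb_trans : ∀ a b c, hb a b → hb b c → hb a c
  interval : ∀ a b c d, hb a b → hb c d → hb a d ∨ hb c b

/-- `u` is a linearization of the history `h`: it enumerates exactly the
operations of `h` in an order extending happens-before. -/
def QHistory.Linearizes (h : QHistory) (u : List QOp) : Prop :=
  u.Nodup ∧ (∀ o, o ∈ u ↔ o ∈ h.ops) ∧ u.Pairwise (fun a b => ¬ h.hb b a)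

/-- `h` is linearizable with respect to the set of sequential words `M`. -/
def LinearizableSet (h : QHistory) (M : List QOp → Prop) : Prop :=
  ∃ u, M u ∧ h.Linearizes u

def noDeq (u : List QOp) : Prop := ∀ d, QOp.deq d ∉ u

def noUnmatchedEnq (u : List QOp) : Prop := ∀ d, QOp.enq d ∈ u → QOp.deq d ∈ u

/-- Matching set of the rule R_EnqDeq with witness `x`:
words `Enq(x) · u1 · Deq(x) · u2` where `u1` contains no dequeue. -/
def MatchEnqDeqW (x : ℕ) (w : List QOp) : Prop :=
  ∃ u1 u2, w = QOp.enq x :: u1 ++ QOp.deq x :: u2 ∧ noDeq u1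

/-- Matching set of R_EnqDeq (some witness). -/
def MatchEnqDeq (w : List QOp) : Prop := ∃ x, MatchEnqDeqW x w

/-- Data values occurring in a history. -/
def QHistory.dom (h : QHistory) : Set ℕ :=
  {d | QOp.enq d ∈ h.ops ∨ QOp.deq d ∈ h.ops}

def QOp.keep (D K : Set ℕ) : QOp → Prop
  | .enq d => d ∈ D
  | .deq d => d ∈ D
  | .deqEmpty i => i ∈ K

/-- Projection of a history onto the data values in `D`, keeping the
empty-dequeue operations with identifiers in `K`. -/
noncomputable def QHistory.proj (h : QHistory) (D K : Set ℕ) : QHistory :=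
  { h with ops := h.ops.filter (QOp.keep D K) }

/-- Remove all operations on the data value `x`. -/
noncomputable def QHistory.removeVal (h : QHistory) (x : ℕ) : QHistory :=
  { h with ops := h.ops.filter (fun o => o ≠ QOp.enq x ∧ o ≠ QOp.deq x) }

/-- Data values occurring in a sequential word. -/
def wordVals (u : List QOp) : Set ℕ := {d | QOp.enq d ∈ u ∨ QOp.deq d ∈ u}

/-- The words derivable with the rules R_0, R_Enq, R_EnqDeq only. -/
inductive QueueED : List QOp → Prop
  | nil : QueueED []
  | enq (x : ℕ) (u1 u2 : List QOp) :
      QueueED (u1 ++ u2) → x ∉ wordVals (u1 ++ u2) →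
      QueueED (u1 ++ QOp.enq x :: u2)
  | enqdeq (x : ℕ) (u1 u2 : List QOp) :
      QueueED (u1 ++ u2) → noDeq u1 → x ∉ wordVals (u1 ++ u2) →
      QueueED (QOp.enq x :: u1 ++ QOp.deq x :: u2)

section QueueAux

variable {hb : QOp → QOp → Prop}

private lemma aux_before_of_split {a b : QOp} {l r : List QOp} (ha : a ∈ l) (hbr : b ∈ r) :
    [a, b].Sublist (l ++ r) := by
  have h1 : [a].Sublist l := List.singleton_sublist.2 ha
  have h2 : [b].Sublist r := List.singleton_sublist.2 hbr
  simpa using h1.append h2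

private lemma aux_mem_left_of_before {a b : QOp} : ∀ {l r : List QOp}, [a, b].Sublist (l ++ r) →
    b ∈ l → (l ++ r).Nodup → a ∈ l := by
  intro l
  induction l with
  | nil => intro r _ hbl _; simp at hbl
  | cons x t ih =>
    intro r h hbl hnd
    rw [List.cons_append] at h hnd
    cases h with
    | cons _ h' =>
      rcases List.mem_cons.1 hbl with rfl | hbl'
      · exact absurd (h'.subset (by simp)) (List.nodup_cons.1 hnd).1
      · exact List.mem_cons_of_mem _ (ih h' hbl' (List.nodup_cons.1 hnd).2)
    | cons_cons _ h' => exact List.mem_cons_self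

private lemma aux_rel_of_before {R : QOp → QOp → Prop} {u : List QOp} {a b : QOp}
    (hpw : u.Pairwise R) (h : [a, b].Sublist u) : R a b := by
  have h2 := hpw.sublist h
  exact (List.pairwise_cons.1 h2).1 b (by simp)

private lemma aux_dw_head_false (p : QOp → Bool) :
    ∀ (u : List QOp) {z : QOp} {d : List QOp}, u.dropWhile p = z :: d → p z = false := by
  intro u
  induction u with
  | nil => intro z d h; simp [List.dropWhile] at h
  | cons a t ih =>
    intro z d h
    by_cases hpa : p a = true
    · rw [List.dropWhile_cons, if_pos hpa] at h
      exact ih h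
    · rw [List.dropWhile_cons, if_neg hpa] at h
      injection h with h1 _
      subst h1
      simpa [Bool.not_eq_true] using hpa

private lemma aux_mem_takeWhile_of (hirr : ∀ o, ¬ hb o o)
    (P : QOp → Bool) {u : List QOp} (hnd : u.Nodup)
    (hpw : u.Pairwise fun a b => ¬ hb b a) {p : QOp} (hp : p ∈ u)
    (H : ∀ z ∈ u, P z = false → hb p z ∨ ([p, z].Sublist u ∧ p ≠ z)) :
    p ∈ u.takeWhile P := by
  by_contra hnp
  have hsplit : u.takeWhile P ++ u.dropWhile P = u := List.takeWhile_append_dropWhile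
  have hpd : p ∈ u.dropWhile P := by
    have h2 : p ∈ u.takeWhile P ++ u.dropWhile P := by rw [hsplit]; exact hp
    rcases List.mem_append.1 h2 with h | h
    · exact absurd h hnp
    · exact h
  cases hd : u.dropWhile P with
  | nil => rw [hd] at hpd; simp at hpd
  | cons z d' =>
    have hzfail : P z = false := aux_dw_head_false P u hd
    have hzu : z ∈ u := (List.dropWhile_sublist _).subset (by rw [hd]; simp)
    have hu' : u = (u.takeWhile P ++ [z]) ++ d' := by
      rw [List.append_assoc]
      simpa using (by rw [← hd, hsplit] : u.takeWhile P ++ (z :: d') = u).symm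
    rw [hd] at hpd
    rcases H z hzu hzfail with hpz | ⟨hbef, hne⟩
    · rcases List.mem_cons.1 hpd with rfl | hpd'
      · exact hirr _ hpz
      · have hzp : [z, p].Sublist u := by
          rw [hu']; exact aux_before_of_split (by simp) hpd'
        exact aux_rel_of_before hpw hzp hpz
    · have hnd' : ((u.takeWhile P ++ [z]) ++ d').Nodup := by rw [← hu']; exact hnd
      have hbef' : [p, z].Sublist ((u.takeWhile P ++ [z]) ++ d') := by rw [← hu']; exact hbef
      have hmem : p ∈ u.takeWhile P ++ [z] :=
        aux_mem_left_of_before hbef' (by simp) hnd'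
      rcases List.mem_append.1 hmem with h | h
      · exact hnp h
      · simp at h; exact hne h

/-- The key invariant: if no dequeue in `u` happens-before `q`, then every
happens-before predecessor of `q` occurring in `u` occurs before every dequeue
of `u`. -/
def QInv (hb : QOp → QOp → Prop) (u : List QOp) : Prop :=
  ∀ q : QOp, (∀ d, QOp.deq d ∈ u → ¬ hb (QOp.deq d) q) →
    ∀ p ∈ u, hb p q → ∀ d, QOp.deq d ∈ u → [p, QOp.deq d].Sublist u

private lemma aux_lemL (hirr : ∀ o, ¬ hb o o)
    (htr : ∀ a b c, hb a b → hb b c → hb a c)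
    (hint : ∀ a b c d, hb a b → hb c d → hb a d ∨ hb c b) :
    ∀ v : List QOp, QueueED v → v.Nodup → (v.Pairwise fun a b => ¬ hb b a) →
    ∃ u : List QOp, u.Perm v ∧ QueueED u ∧ (u.Pairwise fun a b => ¬ hb b a) ∧ QInv hb u := by
  intro v hv
  induction hv with
  | nil =>
    intro _ _
    exact ⟨[], List.Perm.refl _, QueueED.nil, List.Pairwise.nil, by intro q _ p hp; simp at hp⟩
  | enq y w1 w2 hQ0 hy ih =>
    intro hnd hpw
    have hsub0 : (w1 ++ w2).Sublist (w1 ++ QOp.enq y :: w2) :=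
      (List.sublist_cons_self (QOp.enq y) w2).append_left w1
    obtain ⟨u0, hperm0, hQu0, hpw0, hInv0⟩ := ih (hnd.sublist hsub0) (hpw.sublist hsub0)
    have hnd0 : u0.Nodup := (hperm0.nodup_iff).2 (hnd.sublist hsub0)
    have hmem0 : ∀ o : QOp, o ∈ u0 ↔ o ∈ w1 ++ w2 := fun o => hperm0.mem_iff
    have henqnot : QOp.enq y ∉ u0 := fun hin => hy (Or.inl ((hmem0 _).1 hin))
    have hdeqnot : QOp.deq y ∉ u0 := fun hin => hy (Or.inr ((hmem0 _).1 hin))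
    -- the auxiliary property "enq y is a predecessor of some deq-unpreceded op"
    set HyP : Prop := ∃ q, hb (QOp.enq y) q ∧ ∀ d, QOp.deq d ∈ u0 → ¬ hb (QOp.deq d) q with hHyP
    set P : QOp → Bool := fun o => decide (¬ hb (QOp.enq y) o ∧ (HyP → ∀ d, o ≠ QOp.deq d)) with hP
    set l : List QOp := u0.takeWhile P with hl
    set r : List QOp := u0.dropWhile P with hr
    have hlr : l ++ r = u0 := List.takeWhile_append_dropWhile
    have hPl : ∀ a ∈ l, ¬ hb (QOp.enq y) a ∧ (HyP → ∀ d, a ≠ QOp.deq d) := by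
      intro a ha
      have := List.mem_takeWhile_imp ha
      simp only [hP] at this
      exact of_decide_eq_true this
    have hmemlr : ∀ o : QOp, o ∈ l → o ∈ u0 := fun o ho => (List.takeWhile_sublist _).subset ho
    have hmemrr : ∀ o : QOp, o ∈ r → o ∈ u0 := fun o ho => (List.dropWhile_sublist _).subset ho
    have hdisj : ∀ a : QOp, a ∈ l → a ∈ r → False := by
      intro a h1 h2
      have := hnd0
      rw [← hlr] at this
      exact (List.disjoint_of_nodup_append this) h1 h2
    have hpreds : ∀ p ∈ u0, hb p (QOp.enq y) → p ∈ l := by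
      intro p hp hpe
      apply aux_mem_takeWhile_of hirr P hnd0 hpw0 hp
      intro z hz hzf
      have hz' : ¬ (¬ hb (QOp.enq y) z ∧ (HyP → ∀ d, z ≠ QOp.deq d)) := by
        intro hc
        simp only [hP] at hzf
        rw [decide_eq_true hc] at hzf
        exact absurd hzf (by simp)
      rcases not_and_or.1 hz' with h1 | h2
      · exact Or.inl (htr _ _ _ hpe (not_not.1 h1))
      · have h3 := Classical.not_imp.1 h2
        obtain ⟨hHy, h4⟩ := h3
        obtain ⟨d, hd⟩ := not_forall.1 h4
        have hzd : z = QOp.deq d := not_not.1 hd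
        obtain ⟨q0, hq0e, hq0p⟩ := hHy
        subst hzd
        refine Or.inr ⟨hInv0 q0 hq0p p hp (htr _ _ _ hpe hq0e) d hz, ?_⟩
        rintro rfl
        exact hq0p d hz (htr _ _ _ hpe hq0e)
    refine ⟨l ++ QOp.enq y :: r, ?_, ?_, ?_, ?_⟩
    · -- permutation
      have hp1 : (l ++ r).Perm (w1 ++ w2) := by rw [hlr]; exact hperm0
      exact List.perm_middle.trans ((hp1.cons _).trans List.perm_middle.symm)
    · -- QueueED
      refine QueueED.enq y l r ?_ ?_
      · rw [hlr]; exact hQu0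
      · rw [hlr]
        intro hcase
        rcases hcase with hc | hc
        · exact henqnot hc
        · exact hdeqnot hc
    · -- pairwise
      rw [List.pairwise_append]
      have hcross0 := (List.pairwise_append.1 (by rw [hlr]; exact hpw0 :
        (l ++ r).Pairwise fun a b => ¬ hb b a)).2.2
      refine ⟨hpw0.sublist (List.takeWhile_sublist _), ?_, ?_⟩
      · rw [List.pairwise_cons]
        refine ⟨?_, hpw0.sublist (List.dropWhile_sublist _)⟩
        intro b hbr hbe
        exact hdisj b (hpreds b (hmemrr b hbr) hbe) hbr
      · intro a ha b hbmem
        rcases List.mem_cons.1 hbmem with rfl | hbr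
        · exact (hPl a ha).1
        · exact hcross0 a ha b hbr
    · -- QInv
      intro q hqprem p hp hpq d hd
      have hmemu : ∀ o : QOp, o ∈ l ++ QOp.enq y :: r ↔ o = QOp.enq y ∨ o ∈ u0 := by
        intro o
        rw [← hlr]
        constructor
        · intro hm
          rcases List.mem_append.1 hm with hm | hm
          · exact Or.inr (List.mem_append.2 (Or.inl hm))
          · rcases List.mem_cons.1 hm with rfl | hm
            · exact Or.inl rfl
            · exact Or.inr (List.mem_append.2 (Or.inr hm))
        · intro hm
          rcases hm with rfl | hm
          · exact List.mem_append.2 (Or.inr (List.mem_cons_self))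
          · rcases List.mem_append.1 hm with hm | hm
            · exact List.mem_append.2 (Or.inl hm)
            · exact List.mem_append.2 (Or.inr (List.mem_cons_of_mem _ hm))
      have hdu0 : QOp.deq d ∈ u0 := by
        rcases (hmemu _).1 hd with h | h
        · exact absurd h (by simp)
        · exact h
      have hqprem0 : ∀ d', QOp.deq d' ∈ u0 → ¬ hb (QOp.deq d') q := fun d' hd' =>
        hqprem d' ((hmemu _).2 (Or.inr hd'))
      rcases (hmemu p).1 hp with rfl | hpu0
      · -- p = enq y
        have hHy : HyP := ⟨q, hpq, hqprem0⟩
        have hdr : QOp.deq d ∈ r := by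
          have h2 : QOp.deq d ∈ l ++ r := by rw [hlr]; exact hdu0
          rcases List.mem_append.1 h2 with h | h
          · exact absurd rfl ((hPl _ h).2 hHy d)
          · exact h
        have : [QOp.enq y, QOp.deq d].Sublist ((l ++ [QOp.enq y]) ++ r) :=
          aux_before_of_split (by simp) hdr
        simpa [List.append_assoc] using this
      · have h2 := hInv0 q hqprem0 p hpu0 hpq d hdu0
        rw [← hlr] at h2
        exact h2.trans ((List.sublist_cons_self _ _).append_left l)
  | enqdeq y w1 w2 hQ0 hnd1 hy ih =>
    intro hnd hpw
    have hsubt : (w1 ++ QOp.deq y :: w2).Sublist (QOp.enq y :: w1 ++ QOp.deq y :: w2) :=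
      List.sublist_cons_self _ _
    have hsub0 : (w1 ++ w2).Sublist (w1 ++ QOp.deq y :: w2) :=
      (List.sublist_cons_self (QOp.deq y) w2).append_left w1
    have hsub : (w1 ++ w2).Sublist (QOp.enq y :: w1 ++ QOp.deq y :: w2) := hsub0.trans hsubt
    obtain ⟨u0, hperm0, hQu0, hpw0, hInv0⟩ := ih (hnd.sublist hsub) (hpw.sublist hsub)
    have hnd0 : u0.Nodup := (hperm0.nodup_iff).2 (hnd.sublist hsub)
    have hmem0 : ∀ o : QOp, o ∈ u0 ↔ o ∈ w1 ++ w2 := fun o => hperm0.mem_iff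
    have henqnot : QOp.enq y ∉ u0 := fun hin => hy (Or.inl ((hmem0 _).1 hin))
    have hdeqnot : QOp.deq y ∉ u0 := fun hin => hy (Or.inr ((hmem0 _).1 hin))
    have hpwt : (w1 ++ QOp.deq y :: w2).Pairwise fun a b => ¬ hb b a := hpw.sublist hsubt
    have hpwhead : ∀ o ∈ w1 ++ QOp.deq y :: w2, ¬ hb o (QOp.enq y) :=
      (List.pairwise_cons.1 hpw).1
    have hC : ∀ d, QOp.deq d ∈ u0 → ¬ hb (QOp.deq d) (QOp.deq y) := by
      intro d hd
      have hdv0 : QOp.deq d ∈ w1 ++ w2 := (hmem0 _).1 hd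
      have hdw2 : QOp.deq d ∈ w2 := by
        rcases List.mem_append.1 hdv0 with h | h
        · exact absurd h (hnd1 d)
        · exact h
      have h2 := (List.pairwise_append.1 hpwt).2.1
      exact (List.pairwise_cons.1 h2).1 _ hdw2
    set P : QOp → Bool := fun o => decide (¬ hb (QOp.deq y) o ∧ ∀ d, o ≠ QOp.deq d) with hP
    set l : List QOp := u0.takeWhile P with hl
    set r : List QOp := u0.dropWhile P with hr
    have hlr : l ++ r = u0 := List.takeWhile_append_dropWhile
    have hPl : ∀ a ∈ l, ¬ hb (QOp.deq y) a ∧ ∀ d, a ≠ QOp.deq d := by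
      intro a ha
      have := List.mem_takeWhile_imp ha
      simp only [hP] at this
      exact of_decide_eq_true this
    have hmemlr : ∀ o : QOp, o ∈ l → o ∈ u0 := fun o ho => (List.takeWhile_sublist _).subset ho
    have hmemrr : ∀ o : QOp, o ∈ r → o ∈ u0 := fun o ho => (List.dropWhile_sublist _).subset ho
    have hdisj : ∀ a : QOp, a ∈ l → a ∈ r → False := by
      intro a h1 h2
      have := hnd0
      rw [← hlr] at this
      exact (List.disjoint_of_nodup_append this) h1 h2
    have hkey : ∀ q : QOp, (∀ d, QOp.deq d ∈ u0 → ¬ hb (QOp.deq d) q) → ¬ hb (QOp.deq y) q →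
        ∀ p ∈ u0, hb p q → p ∈ l := by
      intro q hqprem hnyq p hp hpq
      apply aux_mem_takeWhile_of hirr P hnd0 hpw0 hp
      intro z hz hzf
      have hz' : ¬ (¬ hb (QOp.deq y) z ∧ ∀ d, z ≠ QOp.deq d) := by
        intro hc
        simp only [hP] at hzf
        rw [decide_eq_true hc] at hzf
        exact absurd hzf (by simp)
      rcases not_and_or.1 hz' with h1 | h2
      · have hyz : hb (QOp.deq y) z := not_not.1 h1
        rcases hint (QOp.deq y) z p q hyz hpq with h | h
        · exact absurd h hnyq
        · exact Or.inl h
      · obtain ⟨d, hd⟩ := not_forall.1 h2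
        have hzd : z = QOp.deq d := not_not.1 hd
        subst hzd
        refine Or.inr ⟨hInv0 q hqprem p hp hpq d hz, ?_⟩
        rintro rfl
        exact hqprem d hz hpq
    refine ⟨QOp.enq y :: l ++ QOp.deq y :: r, ?_, ?_, ?_, ?_⟩
    · -- permutation
      refine List.Perm.cons _ ?_
      have hp1 : (l ++ r).Perm (w1 ++ w2) := by rw [hlr]; exact hperm0
      exact List.perm_middle.trans ((hp1.cons _).trans List.perm_middle.symm)
    · -- QueueED
      refine QueueED.enqdeq y l r ?_ ?_ ?_
      · rw [hlr]; exact hQu0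
      · intro d hdl
        exact ((hPl _ hdl).2 d) rfl
      · rw [hlr]
        intro hcase
        rcases hcase with hc | hc
        · exact henqnot hc
        · exact hdeqnot hc
    · -- pairwise
      have hmemt : ∀ o : QOp, o ∈ l ++ QOp.deq y :: r → o = QOp.deq y ∨ o ∈ u0 := by
        intro o hm
        rcases List.mem_append.1 hm with hm | hm
        · exact Or.inr (hmemlr _ hm)
        · rcases List.mem_cons.1 hm with rfl | hm
          · exact Or.inl rfl
          · exact Or.inr (hmemrr _ hm)
      show List.Pairwise (fun a b => ¬ hb b a) (QOp.enq y :: (l ++ QOp.deq y :: r))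
      rw [List.pairwise_cons]
      constructor
      · intro o ho
        rcases hmemt o ho with rfl | hou0
        · exact hpwhead _ (by simp)
        · exact hpwhead _ (hsub0.subset ((hmem0 _).1 hou0))
      · rw [List.pairwise_append]
        have hcross0 := (List.pairwise_append.1 (by rw [hlr]; exact hpw0 :
          (l ++ r).Pairwise fun a b => ¬ hb b a)).2.2
        refine ⟨hpw0.sublist (List.takeWhile_sublist _), ?_, ?_⟩
        · rw [List.pairwise_cons]
          refine ⟨?_, hpw0.sublist (List.dropWhile_sublist _)⟩
          intro b hbr hbe
          exact hdisj b (hkey (QOp.deq y) hC (hirr _) b (hmemrr _ hbr) hbe) hbr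
        · intro a ha b hbmem
          rcases List.mem_cons.1 hbmem with rfl | hbr
          · exact (hPl a ha).1
          · exact hcross0 a ha b hbr
    · -- QInv
      intro q hqprem p hp hpq d hd
      have hmemu : ∀ o : QOp, o ∈ QOp.enq y :: l ++ QOp.deq y :: r ↔
          o = QOp.enq y ∨ o = QOp.deq y ∨ o ∈ u0 := by
        intro o
        rw [← hlr]
        constructor
        · intro hm
          rcases List.mem_cons.1 hm with rfl | hm
          · exact Or.inl rfl
          · rcases List.mem_append.1 hm with hm | hm
            · exact Or.inr (Or.inr (List.mem_append.2 (Or.inl hm)))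
            · rcases List.mem_cons.1 hm with rfl | hm
              · exact Or.inr (Or.inl rfl)
              · exact Or.inr (Or.inr (List.mem_append.2 (Or.inr hm)))
        · intro hm
          rcases hm with rfl | rfl | hm
          · exact List.mem_cons_self
          · exact List.mem_cons_of_mem _ (List.mem_append.2 (Or.inr (List.mem_cons_self)))
          · rcases List.mem_append.1 hm with hm | hm
            · exact List.mem_cons_of_mem _ (List.mem_append.2 (Or.inl hm))
            · exact List.mem_cons_of_mem _
                (List.mem_append.2 (Or.inr (List.mem_cons_of_mem _ hm)))
      have hqprem0 : ∀ d', QOp.deq d' ∈ u0 → ¬ hb (QOp.deq d') q := fun d' hd' =>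
        hqprem d' ((hmemu _).2 (Or.inr (Or.inr hd')))
      have hnyq : ¬ hb (QOp.deq y) q := hqprem y ((hmemu _).2 (Or.inr (Or.inl rfl)))
      rcases (hmemu p).1 hp with rfl | rfl | hpu0
      · -- p = enq y : need [enq y, deq d] <+ enq y :: (l ++ deq y :: r)
        have hdt : QOp.deq d ∈ l ++ QOp.deq y :: r := by
          rcases (hmemu _).1 hd with habs | h | hu
          · exact absurd habs (by simp)
          · rw [h]; exact List.mem_append.2 (Or.inr (List.mem_cons_self))
          · have h2 : QOp.deq d ∈ l ++ r := by rw [hlr]; exact hu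
            rcases List.mem_append.1 h2 with h3 | h3
            · exact List.mem_append.2 (Or.inl h3)
            · exact List.mem_append.2 (Or.inr (List.mem_cons_of_mem _ h3))
        exact (List.singleton_sublist.2 hdt).cons₂ _
      · exact absurd hpq hnyq
      · rcases (hmemu _).1 hd with habs | hdy | hdu0
        · exact absurd habs (by simp)
        · -- deq d = deq y: show p ∈ l
          have hpl : p ∈ l := hkey q hqprem0 hnyq p hpu0 hpq
          rw [hdy]
          have h2 : [p, QOp.deq y].Sublist ((QOp.enq y :: l) ++ (QOp.deq y :: r)) :=
            aux_before_of_split (List.mem_cons_of_mem _ hpl) (List.mem_cons_self)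
          simpa using h2
        · have h2 := hInv0 q hqprem0 p hpu0 hpq d hdu0
          rw [← hlr] at h2
          have h3 : (l ++ r).Sublist (l ++ QOp.deq y :: r) :=
            (List.sublist_cons_self _ _).append_left l
          exact (h2.trans h3).trans (List.sublist_cons_self _ _)

end QueueAux


/-- queue step-by-step linearizability, Enq-Deq case: if the
differentiated history `h` is linearizable with respect to a word matching
R_EnqDeq with witness `x` (i.e. `Enq(x) · u1 · Deq(x) · u2` with no dequeue in
`u1`), and `h` minus all operations on `x` is linearizable with respect to
`dw{R_0, R_Enq, R_EnqDeq}`, then so is `h` itself. -/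
theorem queue_sbs_enqdeq (h : QHistory) (x : ℕ) (u1 u2 : List QOp)
    (hlin : h.Linearizes (QOp.enq x :: u1 ++ QOp.deq x :: u2))
    (hnd : noDeq u1)
    (hrem : LinearizableSet (h.removeVal x) QueueED) :
    LinearizableSet h QueueED := by
  obtain ⟨hwnd, hwmem, hwpw⟩ := hlin
  obtain ⟨v, hvQ, hvnd, hvmem, hvpw⟩ := hrem
  have hvmem' : ∀ o : QOp, o ∈ v ↔ o ∈ h.ops ∧ o ≠ QOp.enq x ∧ o ≠ QOp.deq x := by
    intro o
    rw [hvmem o]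
    exact Finset.mem_filter
  -- v's pairwise is with respect to h.hb (removeVal keeps hb)
  have hvpw' : v.Pairwise fun a b => ¬ h.hb b a := hvpw
  obtain ⟨u, hperm, huQ, hupw, huInv⟩ :=
    aux_lemL h.hb_irrefl h.hb_trans h.interval v hvQ hvnd hvpw'
  have hund : u.Nodup := (hperm.nodup_iff).2 hvnd
  have humem : ∀ o : QOp, o ∈ u ↔ o ∈ h.ops ∧ o ≠ QOp.enq x ∧ o ≠ QOp.deq x := by
    intro o; rw [hperm.mem_iff]; exact hvmem' o
  -- facts from the given linearization w
  have hwhead : ∀ o ∈ u1 ++ QOp.deq x :: u2, ¬ h.hb o (QOp.enq x) :=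
    (List.pairwise_cons.1 hwpw).1
  have hwtail : (u1 ++ QOp.deq x :: u2).Pairwise fun a b => ¬ h.hb b a :=
    (List.pairwise_cons.1 hwpw).2
  have hwdeq : ∀ o ∈ u2, ¬ h.hb o (QOp.deq x) := by
    have h2 := (List.pairwise_append.1 hwtail).2.1
    exact (List.pairwise_cons.1 h2).1
  have henqmem : QOp.enq x ∈ h.ops := (hwmem _).1 (List.mem_cons_self)
  have hdeqmem : QOp.deq x ∈ h.ops :=
    (hwmem _).1 (List.mem_cons_of_mem _ (List.mem_append.2 (Or.inr (List.mem_cons_self))))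
  -- the premise of the invariant for q = deq x
  have hq : ∀ d, QOp.deq d ∈ u → ¬ h.hb (QOp.deq d) (QOp.deq x) := by
    intro d hdu
    obtain ⟨hdops, hne1, hne2⟩ := (humem _).1 hdu
    have hdw : QOp.deq d ∈ QOp.enq x :: u1 ++ QOp.deq x :: u2 := (hwmem _).2 hdops
    rcases List.mem_cons.1 hdw with habs | hdw'
    · exact absurd habs (by simp)
    · rcases List.mem_append.1 hdw' with h1 | h1
      · exact absurd h1 (hnd d)
      · rcases List.mem_cons.1 h1 with habs | h2
        · exact absurd habs hne2
        · exact hwdeq _ h2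
  set P : QOp → Bool := fun o => decide (¬ h.hb (QOp.deq x) o ∧ ∀ d, o ≠ QOp.deq d) with hP
  set A : List QOp := u.takeWhile P with hA
  set B : List QOp := u.dropWhile P with hB
  have hAB : A ++ B = u := List.takeWhile_append_dropWhile
  have hPA : ∀ a ∈ A, ¬ h.hb (QOp.deq x) a ∧ ∀ d, a ≠ QOp.deq d := by
    intro a ha
    have := List.mem_takeWhile_imp ha
    simp only [hP] at this
    exact of_decide_eq_true this
  have hmemA : ∀ o : QOp, o ∈ A → o ∈ u := fun o ho => (List.takeWhile_sublist _).subset ho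
  have hmemB : ∀ o : QOp, o ∈ B → o ∈ u := fun o ho => (List.dropWhile_sublist _).subset ho
  have hdisj : ∀ a : QOp, a ∈ A → a ∈ B → False := by
    intro a h1 h2
    have := hund
    rw [← hAB] at this
    exact (List.disjoint_of_nodup_append this) h1 h2
  -- all hb-predecessors of deq x lie in A
  have hS : ∀ p ∈ u, h.hb p (QOp.deq x) → p ∈ A := by
    intro p hp hpx
    apply aux_mem_takeWhile_of h.hb_irrefl P hund hupw hp
    intro z hz hzf
    have hz' : ¬ (¬ h.hb (QOp.deq x) z ∧ ∀ d, z ≠ QOp.deq d) := by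
      intro hc
      simp only [hP] at hzf
      rw [decide_eq_true hc] at hzf
      exact absurd hzf (by simp)
    rcases not_and_or.1 hz' with h1 | h2
    · exact Or.inl (h.hb_trans _ _ _ hpx (not_not.1 h1))
    · obtain ⟨d, hd⟩ := not_forall.1 h2
      have hzd : z = QOp.deq d := not_not.1 hd
      subst hzd
      refine Or.inr ⟨huInv (QOp.deq x) hq p hp hpx d hz, ?_⟩
      rintro rfl
      exact hq d hz hpx
  have hBx : ∀ b ∈ B, ¬ h.hb b (QOp.deq x) := by
    intro b hb hbx
    exact hdisj b (hS b (hmemB _ hb) hbx) hb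
  have henqnotu : QOp.enq x ∉ u := fun hc => ((humem _).1 hc).2.1 rfl
  have hdeqnotu : QOp.deq x ∉ u := fun hc => ((humem _).1 hc).2.2 rfl
  refine ⟨QOp.enq x :: A ++ QOp.deq x :: B, ?_, ?_, ?_, ?_⟩
  · -- QueueED
    refine QueueED.enqdeq x A B ?_ ?_ ?_
    · rw [hAB]; exact huQ
    · intro d hdl
      exact ((hPA _ hdl).2 d) rfl
    · rw [hAB]
      intro hcase
      rcases hcase with hc | hc
      · exact henqnotu hc
      · exact hdeqnotu hc
  · -- Nodup
    show (QOp.enq x :: (A ++ QOp.deq x :: B)).Nodup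
    rw [List.nodup_cons]
    constructor
    · intro hc
      rcases List.mem_append.1 hc with h1 | h1
      · exact henqnotu (hmemA _ h1)
      · rcases List.mem_cons.1 h1 with habs | h2
        · exact absurd habs (by simp)
        · exact henqnotu (hmemB _ h2)
    · rw [List.nodup_middle, List.nodup_cons]
      constructor
      · rw [hAB]; exact hdeqnotu
      · rw [hAB]; exact hund
  · -- membership
    intro o
    constructor
    · intro hm
      rcases List.mem_cons.1 hm with rfl | hm
      · exact henqmem
      · rcases List.mem_append.1 hm with h1 | h1
        · exact ((humem _).1 (hmemA _ h1)).1
        · rcases List.mem_cons.1 h1 with rfl | h2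
          · exact hdeqmem
          · exact ((humem _).1 (hmemB _ h2)).1
    · intro hm
      by_cases he : o = QOp.enq x
      · rw [he]; exact List.mem_cons_self
      by_cases hd : o = QOp.deq x
      · rw [hd]
        exact List.mem_cons_of_mem _ (List.mem_append.2 (Or.inr (List.mem_cons_self)))
      · have hou : o ∈ u := (humem _).2 ⟨hm, he, hd⟩
        have : o ∈ A ++ B := by rw [hAB]; exact hou
        rcases List.mem_append.1 this with h1 | h1
        · exact List.mem_cons_of_mem _ (List.mem_append.2 (Or.inl h1))
        · exact List.mem_cons_of_mem _
            (List.mem_append.2 (Or.inr (List.mem_cons_of_mem _ h1)))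
  · -- pairwise
    show List.Pairwise (fun a b => ¬ h.hb b a) (QOp.enq x :: (A ++ QOp.deq x :: B))
    rw [List.pairwise_cons]
    constructor
    · intro o ho
      have how : o ∈ u1 ++ QOp.deq x :: u2 := by
        rcases List.mem_append.1 ho with h1 | h1
        · obtain ⟨hops, hne1, _⟩ := (humem _).1 (hmemA _ h1)
          have : o ∈ QOp.enq x :: u1 ++ QOp.deq x :: u2 := (hwmem _).2 hops
          rcases List.mem_cons.1 this with habs | h2
          · exact absurd habs hne1
          · exact h2
        · rcases List.mem_cons.1 h1 with rfl | h2
          · exact List.mem_append.2 (Or.inr (List.mem_cons_self))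
          · obtain ⟨hops, hne1, _⟩ := (humem _).1 (hmemB _ h2)
            have : o ∈ QOp.enq x :: u1 ++ QOp.deq x :: u2 := (hwmem _).2 hops
            rcases List.mem_cons.1 this with habs | h2'
            · exact absurd habs hne1
            · exact h2'
      exact hwhead _ how
    · rw [List.pairwise_append]
      have hcross0 := (List.pairwise_append.1 (by rw [hAB]; exact hupw :
        (A ++ B).Pairwise fun a b => ¬ h.hb b a)).2.2
      refine ⟨hupw.sublist (List.takeWhile_sublist _), ?_, ?_⟩
      · rw [List.pairwise_cons]
        exact ⟨hBx, hupw.sublist (List.dropWhile_sublist _)⟩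
      · intro a ha b hbmem
        rcases List.mem_cons.1 hbmem with rfl | hbr
        · exact (hPA a ha).1
        · exact hcross0 a ha b hbr
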